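/- Existence and sign-dependence of the p → 0 limit of the shifted fusion operator J_m(z p^s): Let a : ℕ^r∖{0} → ℝ and suppose c_m ≠ 0 for every multi-index m ≠ 0. Suppose J : ℕ^r → ((0,1) → M_N(ℂ)) satisfies, for all sufficiently small real q > 0: J_0(q) = 1 and, for every multi-index n ≠ 0, (c_n q^{a_n} − 1)·J_n(q) = ∑_{0 ≠ m ≤ n} J_{n−m}(q)·R(m). Fix a multi-index n ≠ 0 and assume a_m ≠ 0 for every m with 0 ≠ m ≤ n. Then lim_{q→0⁺} J_n(q) exists and equals L_n, where L is defined recursively by L_0 = 1 and, for 0 ≠ m ≤ n: L_m = 0 if a_m < 0, and L_m = −∑_{0 ≠ m′ ≤ m} L_{m−m′}·R(m′) if a_m > 0. In particular the limit depends only on the signs of the exponents a_m for 0 ≠ m ≤ n. -/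

import Mathlib

open Filter Real

private lemma rpow_tendsto_zero' {a : ℝ} (ha : 0 < a) :
    Tendsto (fun q : ℝ => q ^ a) (nhdsWithin 0 (Set.Ioi 0)) (nhds 0) := by
  have h1 : Tendsto (fun q : ℝ => Real.log q * a) (nhdsWithin 0 (Set.Ioi 0)) atBot :=
    Real.tendsto_log_nhdsGT_zero.atBot_mul_const ha
  have h2 := Real.tendsto_exp_atBot.comp h1
  refine h2.congr' ?_
  filter_upwards [self_mem_nhdsWithin] with q hq
  exact (Real.rpow_def_of_pos hq a).symm

private lemma rpow_tendsto_atTop' {a : ℝ} (ha : a < 0) :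
    Tendsto (fun q : ℝ => q ^ a) (nhdsWithin 0 (Set.Ioi 0)) atTop := by
  have h1 : Tendsto (fun q : ℝ => Real.log q * a) (nhdsWithin 0 (Set.Ioi 0)) atTop :=
    Real.tendsto_log_nhdsGT_zero.atBot_mul_const_of_neg ha
  have h2 := Real.tendsto_exp_atTop.comp h1
  refine h2.congr' ?_
  filter_upwards [self_mem_nhdsWithin] with q hq
  exact (Real.rpow_def_of_pos hq a).symm

/-- Existence and sign-dependence of the `p → 0` limit of the shifted fusion
operator `J_m(z p^s)`: the limit of `J_n(q)` as `q → 0⁺` exists and equals the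
value `L n` of the recursively defined family `L` (so the limit depends only on
the signs of the exponents `a m` for `0 ≠ m ≤ n`). -/
theorem shifted_fusion_operator_limit_exists
    (r N : ℕ) (hr : 1 ≤ r) (hN : 1 ≤ N)
    (R : (Fin r → ℕ) → Matrix (Fin N) (Fin N) ℂ) (hR0 : R 0 = 0)
    (c : (Fin r → ℕ) → ℂ) (hc : ∀ m : Fin r → ℕ, m ≠ 0 → c m ≠ 0)
    (a : (Fin r → ℕ) → ℝ)
    (J : (Fin r → ℕ) → ℝ → Matrix (Fin N) (Fin N) ℂ)
    (hJ : ∃ ε : ℝ, 0 < ε ∧ ∀ q : ℝ, 0 < q → q < ε →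
      J 0 q = 1 ∧ ∀ n : Fin r → ℕ, n ≠ 0 →
        (c n * ((q ^ a n : ℝ) : ℂ) - 1) • J n q =
          ∑ m ∈ (Finset.Iic n).filter (· ≠ 0), J (n - m) q * R m)
    (n : Fin r → ℕ) (hn : n ≠ 0)
    (ha : ∀ m : Fin r → ℕ, m ≠ 0 → m ≤ n → a m ≠ 0)
    (L : (Fin r → ℕ) → Matrix (Fin N) (Fin N) ℂ)
    (hL0 : L 0 = 1)
    (hLneg : ∀ m : Fin r → ℕ, m ≠ 0 → m ≤ n → a m < 0 → L m = 0)
    (hLpos : ∀ m : Fin r → ℕ, m ≠ 0 → m ≤ n → 0 < a m →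
      L m = -∑ m' ∈ (Finset.Iic m).filter (· ≠ 0), L (m - m') * R m') :
    Filter.Tendsto (J n) (nhdsWithin 0 (Set.Ioi 0)) (nhds (L n)) := by
  obtain ⟨ε, hε, hJ'⟩ := hJ
  set F := nhdsWithin (0 : ℝ) (Set.Ioi 0) with hF
  have hsmall : ∀ᶠ q in F, 0 < q ∧ q < ε := by
    have : Set.Ioo (0:ℝ) ε ∈ F := Ioo_mem_nhdsGT_of_mem ⟨le_refl 0, hε⟩
    filter_upwards [this] with q hq; exact ⟨hq.1, hq.2⟩
  -- base case limit for J 0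
  have hJ0 : Tendsto (J 0) F (nhds (L 0)) := by
    rw [hL0]
    refine tendsto_const_nhds.congr' ?_
    filter_upwards [hsmall] with q hq
    exact ((hJ' q hq.1 hq.2).1).symm
  suffices H : ∀ k, ∀ m : Fin r → ℕ, (∑ i, m i) ≤ k → m ≤ n →
      Tendsto (J m) F (nhds (L m)) from H (∑ i, n i) n le_rfl le_rfl
  intro k
  induction k with
  | zero =>
    intro m hm _
    have hm0 : m = 0 := by
      funext i
      have := Finset.sum_eq_zero_iff.mp (Nat.le_zero.mp hm) i (Finset.mem_univ i)
      simpa using this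
    rw [hm0]; exact hJ0
  | succ k ih =>
    intro m hm hmn
    by_cases hm0 : m = 0
    · rw [hm0]; exact hJ0
    · have ham := ha m hm0 hmn
      -- limit of the sum
      set T : Matrix (Fin N) (Fin N) ℂ :=
        ∑ m' ∈ (Finset.Iic m).filter (· ≠ 0), L (m - m') * R m' with hT
      have hsum : Tendsto (fun q => ∑ m' ∈ (Finset.Iic m).filter (· ≠ 0),
          J (m - m') q * R m') F (nhds T) := by
        rw [hT]
        refine tendsto_finset_sum _ ?_
        intro m' hm'
        rw [Finset.mem_filter, Finset.mem_Iic] at hm'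
        obtain ⟨hle, hne⟩ := hm'
        have h1 : m - m' ≤ n := le_trans (fun i => Nat.sub_le _ _) hmn
        have h2 : (∑ i, (m - m') i) ≤ k := by
          obtain ⟨i₀, hi₀⟩ := Function.ne_iff.mp hne
          have hi₀' : 0 < m' i₀ := Nat.pos_of_ne_zero (by simpa using hi₀)
          have hlt : (∑ i, (m - m') i) < ∑ i, m i := by
            refine Finset.sum_lt_sum (fun i _ => Nat.sub_le _ _)
              ⟨i₀, Finset.mem_univ i₀, ?_⟩
            have : 0 < m i₀ := lt_of_lt_of_le hi₀' (hle i₀)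
            exact Nat.sub_lt this hi₀'
          omega
        exact (ih _ h2 h1).mul tendsto_const_nhds
      -- the scalar function
      set z : ℝ → ℂ := fun q => c m * ((q ^ a m : ℝ) : ℂ) - 1 with hz
      rcases lt_or_gt_of_ne ham with hneg | hpos
      · -- a m < 0 : |z| → ∞, z⁻¹ → 0, limit 0
        have hnorm : Tendsto (fun q => ‖z q‖) F atTop := by
          have h1 : Tendsto (fun q : ℝ => ‖c m‖ * q ^ a m - 1) F atTop :=
            tendsto_atTop_add_const_right _ (-1)
              ((rpow_tendsto_atTop' hneg).const_mul_atTop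
                (norm_pos_iff.mpr (hc m hm0)))
          refine tendsto_atTop_mono' _ ?_ h1
          filter_upwards [self_mem_nhdsWithin] with q hq
          have hpos' : (0:ℝ) ≤ q ^ a m := le_of_lt (Real.rpow_pos_of_pos hq _)
          calc ‖c m‖ * q ^ a m - 1
              = ‖c m * ((q ^ a m : ℝ) : ℂ)‖ - ‖(1:ℂ)‖ := by
                rw [norm_mul, Complex.norm_real, Real.norm_of_nonneg hpos',
                  norm_one]
            _ ≤ ‖c m * ((q ^ a m : ℝ) : ℂ) - 1‖ := norm_sub_norm_le _ _
        have hne : ∀ᶠ q in F, z q ≠ 0 := by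
          filter_upwards [hnorm.eventually_gt_atTop 0] with q hq
          exact fun h => by simp [h] at hq
        have hinv : Tendsto (fun q => (z q)⁻¹) F (nhds 0) := by
          rw [tendsto_zero_iff_norm_tendsto_zero]
          simpa [norm_inv, Pi.inv_def] using hnorm.inv_tendsto_atTop
        have hlim : Tendsto (J m) F (nhds ((0 : ℂ) • T)) := by
          refine (hinv.smul hsum).congr' ?_
          filter_upwards [hsmall, hne] with q hq hzq
          have heq := (hJ' q hq.1 hq.2).2 m hm0
          rw [← heq]
          exact inv_smul_smul₀ hzq _
        rw [hLneg m hm0 hmn hneg]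
        simpa using hlim
      · -- a m > 0 : z → -1, z⁻¹ → -1
        have hz1 : Tendsto z F (nhds (-1)) := by
          have h0 : Tendsto (fun q : ℝ => ((q ^ a m : ℝ) : ℂ)) F (nhds 0) := by
            have := (Complex.continuous_ofReal.tendsto 0).comp
              (rpow_tendsto_zero' hpos)
            simpa [Function.comp_def] using this
          have := ((h0.const_mul (c m)).sub_const 1)
          simpa using this
        have hne : ∀ᶠ q in F, z q ≠ 0 :=
          hz1.eventually_ne (by norm_num : (-1 : ℂ) ≠ 0)
        have hinv : Tendsto (fun q => (z q)⁻¹) F (nhds (-1)) := by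
          have := hz1.inv₀ (by norm_num : (-1 : ℂ) ≠ 0)
          simpa [inv_neg, inv_one] using this
        have hlim : Tendsto (J m) F (nhds ((-1 : ℂ) • T)) := by
          refine (hinv.smul hsum).congr' ?_
          filter_upwards [hsmall, hne] with q hq hzq
          have heq := (hJ' q hq.1 hq.2).2 m hm0
          rw [← heq]
          exact inv_smul_smul₀ hzq _
        rw [hLpos m hm0 hmn hpos]
        simpa [hT] using hlim
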